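/- arXiv:1611.06739 — 4 statements merged into one kernel-verified Lean document; each statement's English description precedes it below -/
import Mathlib

section
/- If I ⊆ {1,…,m} satisfies |I| > h, then I ∈ 𝒳 (i.e., H_I is rejected by the closed testing procedure with Simes local tests). -/
open Finset

attribute [local instance] Classical.propDecidable

/-- The `i`-th smallest (1-indexed) element of the multiset of p-values `{p_j : j ∈ I}`. -/
noncomputable def pOrd {m : ℕ} (p : Fin m → ℝ) (I : Finset (Fin m)) (i : ℕ) : ℝ :=
  ((I.val.map p).sort (· ≤ ·)).getD (i - 1) 0

/-- The Simes local test rejects `H_I` (written `I ∈ 𝒰`) iff `I` is nonempty and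
`|I|·p_{(i:I)} ≤ i·α` for at least one `1 ≤ i ≤ |I|`. -/
def SimesU {m : ℕ} (α : ℝ) (p : Fin m → ℝ) (I : Finset (Fin m)) : Prop :=
  ∃ i, 1 ≤ i ∧ i ≤ I.card ∧ (I.card : ℝ) * pOrd p I i ≤ (i : ℝ) * α

/-- Closed testing rejects `H_I` (written `I ∈ 𝒳`) iff `J ∈ 𝒰` for every `J ⊇ I`. -/
def ClosedX {m : ℕ} (α : ℝ) (p : Fin m → ℝ) (I : Finset (Fin m)) : Prop :=
  ∀ J, I ⊆ J → SimesU α p J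

/-- `K_i = {r_{m−i+1},…,r_m}`: the `i` indices with largest p-values. -/
def Kset {m : ℕ} (r : Fin m → Fin m) (i : ℕ) : Finset (Fin m) :=
  (Finset.univ.filter fun j : Fin m => m - i ≤ (j : ℕ)).image r

/-- `L_i = {r_1,…,r_i}`: the `i` indices with smallest p-values. -/
def Lset {m : ℕ} (r : Fin m → Fin m) (i : ℕ) : Finset (Fin m) :=
  (Finset.univ.filter fun j : Fin m => (j : ℕ) < i).image r

/-- `h = max{0 ≤ i ≤ m : K_i ∉ 𝒰}`. -/
noncomputable def hval {m : ℕ} (α : ℝ) (p : Fin m → ℝ) (r : Fin m → Fin m) : ℕ :=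
  sSup {i | i ≤ m ∧ ¬ SimesU α p (Kset r i)}

/-- `t(S) = max{|I| : I ⊆ S, I ∉ 𝒳}`. -/
noncomputable def tval {m : ℕ} (α : ℝ) (p : Fin m → ℝ) (S : Finset (Fin m)) : ℕ :=
  sSup {k | ∃ I, I ⊆ S ∧ ¬ ClosedX α p I ∧ I.card = k}

/-- `d(S) = |S| − t(S)`. -/
noncomputable def dval {m : ℕ} (α : ℝ) (p : Fin m → ℝ) (S : Finset (Fin m)) : ℕ :=
  S.card - tval α p S

/-- `q_α(S) = t(S)/|S|` for nonempty `S`, and `0` for `S = ∅`. -/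
noncomputable def qval {m : ℕ} (α : ℝ) (p : Fin m → ℝ) (S : Finset (Fin m)) : ℝ :=
  if S = ∅ then 0 else (tval α p S : ℝ) / S.card

/-- `z = 0` if `h = m`, else `z = min{m−h ≤ i ≤ m : h·p_{(i)} ≤ (i−m+h+1)·α}`. -/
noncomputable def zval {m : ℕ} (α : ℝ) (p : Fin m → ℝ) (r : Fin m → Fin m) : ℕ :=
  if hval α p r = m then 0 else
    sInf {i | m - hval α p r ≤ i ∧ i ≤ m ∧
      (hval α p r : ℝ) * pOrd p Finset.univ i ≤ ((i : ℝ) - m + hval α p r + 1) * α}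

/-- `b_q = max{1 ≤ i ≤ m : m·p_{(i)} ≤ i·q}` (with `b_q = 0` if no such `i`). -/
noncomputable def bval {m : ℕ} (q : ℝ) (p : Fin m → ℝ) : ℕ :=
  sSup {i | 1 ≤ i ∧ i ≤ m ∧ (m : ℝ) * pOrd p Finset.univ i ≤ (i : ℝ) * q}


lemma aux_sorted_le {l : List ℝ} (hl : l.Pairwise (· ≤ ·)) {x : ℝ} {k : ℕ}
    (hk1 : 1 ≤ k) (hk : k ≤ (l.filter fun y => decide (y ≤ x)).length) :
    l.getD (k-1) 0 ≤ x := by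
  have hlen : k ≤ l.length := le_trans hk (List.length_filter_le _ _)
  have hklt : k - 1 < l.length := by omega
  rw [List.getD_eq_getElem l 0 hklt]
  by_contra hcon
  push_neg at hcon
  have hdrop : (l.drop (k-1)).filter (fun y => decide (y ≤ x)) = [] := by
    rw [List.filter_eq_nil_iff]
    intro a ha
    simp only [decide_eq_true_eq]
    rw [List.mem_iff_getElem] at ha
    obtain ⟨n, hn, rfl⟩ := ha
    have hnl : k - 1 + n < l.length := by
      have := hn; simp [List.length_drop] at this; omega
    rw [List.getElem_drop]
    have hrel : l[k-1] ≤ l[(k-1)+n] := by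
      rcases Nat.eq_or_lt_of_le (Nat.le_add_right (k-1) n) with h | h
      · simp [← h]
      · exact (List.pairwise_iff_getElem.mp hl) _ _ hklt (by
          have := hn; simp [List.length_drop] at this; omega) h
    intro hle
    exact absurd (le_trans hrel hle) (not_le.mpr hcon)
  have hsplit := List.take_append_drop (k-1) l
  have : l.filter (fun y => decide (y ≤ x)) =
      (l.take (k-1)).filter (fun y => decide (y ≤ x)) ++
      (l.drop (k-1)).filter (fun y => decide (y ≤ x)) := by
    conv_lhs => rw [← hsplit]
    rw [List.filter_append]
  rw [this, hdrop] at hk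
  simp only [List.append_nil] at hk
  have := List.length_filter_le (fun y => decide (y ≤ x)) (l.take (k-1))
  have := List.length_take (i := k-1) (l := l)
  omega

lemma aux_count_ge {l : List ℝ} (hl : l.Pairwise (· ≤ ·)) {k : ℕ}
    (hk1 : 1 ≤ k) (hk : k ≤ l.length) :
    k ≤ (l.filter fun y => decide (y ≤ l.getD (k-1) 0)).length := by
  have hklt : k - 1 < l.length := by omega
  have heq : (l.take k).filter (fun y => decide (y ≤ l.getD (k-1) 0)) = l.take k := by
    rw [List.filter_eq_self]
    intro a ha
    simp only [decide_eq_true_eq]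
    rw [List.mem_iff_getElem] at ha
    obtain ⟨n, hn, rfl⟩ := ha
    have hn' : n < k := by simp [List.length_take] at hn; omega
    rw [List.getElem_take, List.getD_eq_getElem l 0 hklt]
    rcases Nat.lt_or_ge n (k-1) with h | h
    · exact (List.pairwise_iff_getElem.mp hl) _ _ (by omega) hklt h
    · have : n = k - 1 := by omega
      simp [this]
  calc k = (l.take k).length := by rw [List.length_take]; omega
    _ = ((l.take k).filter (fun y => decide (y ≤ l.getD (k-1) 0))).length := by rw [heq]
    _ ≤ (l.filter (fun y => decide (y ≤ l.getD (k-1) 0))).length :=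
        ((List.take_sublist k l).filter _).length_le

lemma count_bridge {m : ℕ} (p : Fin m → ℝ) (J : Finset (Fin m)) (x : ℝ) :
    (((J.val.map p).sort (· ≤ ·)).filter fun y => decide (y ≤ x)).length
      = (J.filter fun j => p j ≤ x).card := by
  have h0 : Multiset.card (Multiset.filter (fun y => y ≤ x) (J.val.map p))
      = (J.filter fun j => p j ≤ x).card := by
    rw [← Multiset.countP_eq_card_filter, Multiset.countP_map]
    rfl
  rw [← h0]
  conv_rhs => rw [← Multiset.sort_eq (J.val.map p) (· ≤ ·)]
  rw [Multiset.filter_coe, Multiset.coe_card]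

lemma pOrd_le_of_count {m : ℕ} (p : Fin m → ℝ) (J : Finset (Fin m)) {x : ℝ} {k : ℕ}
    (hk1 : 1 ≤ k) (hc : k ≤ (J.filter fun j => p j ≤ x).card) : pOrd p J k ≤ x :=
  aux_sorted_le (Multiset.pairwise_sort _ _) hk1 (by rw [count_bridge]; exact hc)

lemma count_pOrd {m : ℕ} (p : Fin m → ℝ) (J : Finset (Fin m)) {k : ℕ}
    (hk1 : 1 ≤ k) (hk : k ≤ J.card) :
    k ≤ (J.filter fun j => p j ≤ pOrd p J k).card := by
  rw [← count_bridge]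
  simp only [pOrd]
  exact aux_count_ge (Multiset.pairwise_sort _ _) hk1
    (by rw [Multiset.length_sort, Multiset.card_map]; exact hk)
theorem stmt0
    (m : ℕ) (hm : 1 ≤ m) (α : ℝ) (hα : 0 ≤ α ∧ α ≤ 1)
    (p : Fin m → ℝ) (hp : ∀ i, 0 ≤ p i ∧ p i ≤ 1)
    (r : Fin m → Fin m) (hr : Function.Bijective r)
    (hmono : ∀ i j : Fin m, i ≤ j → p (r i) ≤ p (r j))
    (I : Finset (Fin m)) (hI : hval α p r < I.card) :
    ClosedX α p I := by
  intro J hJsub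
  set i := J.card with hidef
  have hhi : hval α p r < i := lt_of_lt_of_le hI (Finset.card_le_card hJsub)
  have hi1 : 1 ≤ i := by omega
  have him : i ≤ m := by
    have := Finset.card_le_card (Finset.subset_univ J)
    simpa using this
  have hmi : m - i < m := by omega
  -- the K set and its cardinality
  have hKfilter : (Finset.univ.filter fun j : Fin m => m - i ≤ (j : ℕ))
      = Finset.Ici (⟨m - i, hmi⟩ : Fin m) := by
    ext j
    simp [Fin.le_def]
  have hKcard : (Kset r i).card = i := by
    rw [Kset, Finset.card_image_of_injective _ hr.injective, hKfilter, Fin.card_Ici]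
    show m - (m - i) = i
    omega
  -- K_i is rejected by Simes
  have hU : SimesU α p (Kset r i) := by
    by_contra hcon
    have hbdd : BddAbove {n | n ≤ m ∧ ¬ SimesU α p (Kset r n)} :=
      ⟨m, fun n hn => hn.1⟩
    have : i ≤ hval α p r := le_csSup hbdd ⟨him, hcon⟩
    omega
  obtain ⟨k, hk1, hk2, hk3⟩ := hU
  rw [hKcard] at hk2 hk3
  refine ⟨k, hk1, hk2, ?_⟩
  -- key comparison: pOrd p J k ≤ pOrd p (Kset r i) k
  set x := pOrd p (Kset r i) k with hx
  have hcK : k ≤ ((Kset r i).filter fun j => p j ≤ x).card :=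
    count_pOrd p (Kset r i) hk1 (by rw [hKcard]; exact hk2)
  set T := Finset.univ.filter (fun t : Fin m => m - i ≤ (t : ℕ) ∧ p (r t) ≤ x) with hT
  have hTcard : k ≤ T.card := by
    have himg : (Kset r i).filter (fun j => p j ≤ x) = T.image r := by
      rw [Kset, Finset.filter_image, Finset.filter_filter]
    rw [himg, Finset.card_image_of_injective _ hr.injective] at hcK
    exact hcK
  have hTne : T.Nonempty := Finset.card_pos.mp (lt_of_lt_of_le hk1 hTcard)
  set t := T.max' hTne with ht
  obtain ⟨-, htmem1, htmem2⟩ := Finset.mem_filter.mp (T.max'_mem hTne)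
  have himgval : T.image (Fin.val) ⊆ Finset.Icc (m - i) (t : ℕ) := by
    intro a ha
    rw [Finset.mem_image] at ha
    obtain ⟨b, hb, rfl⟩ := ha
    have hble : b ≤ t := T.le_max' b hb
    rw [hT, Finset.mem_filter] at hb
    exact Finset.mem_Icc.mpr ⟨hb.2.1, hble⟩
  have h5 : k ≤ (t : ℕ) + 1 - (m - i) :=
    calc k ≤ T.card := hTcard
      _ = (T.image Fin.val).card :=
          (Finset.card_image_of_injective _ Fin.val_injective).symm
      _ ≤ (Finset.Icc (m - i) (t : ℕ)).card := Finset.card_le_card himgval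
      _ = (t : ℕ) + 1 - (m - i) := Nat.card_Icc _ _
  set A := Finset.univ.filter (fun j : Fin m => p j ≤ x) with hA
  have hAcard : m - i + k ≤ A.card := by
    have hsub : (Finset.Iic t).image r ⊆ A := by
      intro a ha
      rw [Finset.mem_image] at ha
      obtain ⟨b, hb, rfl⟩ := ha
      rw [Finset.mem_Iic] at hb
      rw [hA, Finset.mem_filter]
      exact ⟨Finset.mem_univ _, le_trans (hmono b t hb) htmem2⟩
    calc m - i + k ≤ (t : ℕ) + 1 := by omega
      _ = (Finset.Iic t).card := (Fin.card_Iic t).symm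
      _ = ((Finset.Iic t).image r).card :=
          (Finset.card_image_of_injective _ hr.injective).symm
      _ ≤ A.card := Finset.card_le_card hsub
  have hJA : k ≤ (J.filter (fun j => p j ≤ x)).card := by
    have hinter : J.filter (fun j => p j ≤ x) = J ∩ A := by
      ext j
      simp [hA, Finset.mem_inter, Finset.mem_filter]
    rw [hinter]
    have h6 := Finset.card_union_add_card_inter J A
    have h7 : (J ∪ A).card ≤ m := by
      have := Finset.card_le_card (Finset.subset_univ (J ∪ A))
      simpa using this
    omega
  have hkey : pOrd p J k ≤ x := pOrd_le_of_count p J hk1 hJA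
  calc (i : ℝ) * pOrd p J k ≤ (i : ℝ) * x :=
        mul_le_mul_of_nonneg_left hkey (by positivity)
    _ ≤ (k : ℝ) * α := hk3
end

section
/- For all 0 ≤ i ≤ j ≤ m, if K_i ∈ 𝒰 then K_j ∈ 𝒰; that is, rejection by the Simes test of the worst-case set of size i implies rejection of the worst-case set of every larger size j. -/
open Finset

attribute [local instance] Classical.propDecidable

lemma Kset_filter_val {m : ℕ} (i : ℕ) (him : i ≤ m) :
    (Finset.univ.filter fun j : Fin m => m - i ≤ (j : ℕ)).val
      = ((List.ofFn (fun t : Fin i => (⟨m - i + t.1, by have := t.isLt; omega⟩ : Fin m))) : Multiset (Fin m)) := by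
  have hnd : (List.ofFn (fun t : Fin i => (⟨m - i + t.1, by have := t.isLt; omega⟩ : Fin m))).Nodup := by
    rw [List.nodup_ofFn]
    intro a b hab
    have : m - i + a.1 = m - i + b.1 := congrArg Fin.val hab
    exact Fin.ext (by omega)
  refine (Multiset.Nodup.ext (Finset.filter _ _).nodup (Multiset.coe_nodup.2 hnd)).2 ?_
  intro x
  simp only [Finset.mem_val, Finset.mem_filter, Finset.mem_univ, true_and,
    Multiset.mem_coe, List.mem_ofFn]
  constructor
  · intro hx
    refine ⟨⟨x.1 - (m - i), by have := x.isLt; omega⟩, Fin.ext ?_⟩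
    simp; omega
  · rintro ⟨t, rfl⟩
    simp

lemma sort_Kset {m : ℕ} (p : Fin m → ℝ) (r : Fin m → Fin m) (hr : Function.Injective r)
    (hmono : ∀ a b : Fin m, a ≤ b → p (r a) ≤ p (r b)) (i : ℕ) (him : i ≤ m) :
    ((Kset r i).val.map p).sort (· ≤ ·)
      = List.ofFn (fun t : Fin i => p (r ⟨m - i + t.1, by have := t.isLt; omega⟩)) := by
  have hval : (Kset r i).val.map p
      = ((List.ofFn (fun t : Fin i => p (r ⟨m - i + t.1, by have := t.isLt; omega⟩))) : Multiset ℝ) := by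
    rw [Kset, Finset.image_val, Kset_filter_val i him]
    have hnd : (Multiset.map r ((List.ofFn (fun t : Fin i => (⟨m - i + t.1, by have := t.isLt; omega⟩ : Fin m))) : Multiset (Fin m))).Nodup := by
      apply Multiset.Nodup.map hr
      rw [← Kset_filter_val i him]
      exact (Finset.filter _ _).nodup
    rw [Multiset.dedup_eq_self.2 hnd, Multiset.map_coe, Multiset.map_coe, List.map_ofFn, List.map_ofFn]
    rfl
  haveI : IsAntisymm ℝ (· ≤ ·) := ⟨fun _ _ => le_antisymm⟩
  refine (fun h1 h2 h3 => List.Perm.eq_of_pairwise' (r := (· ≤ ·)) h2 h3 h1) ?_ ?_ ?_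
  · apply Multiset.coe_eq_coe.mp
    rw [Multiset.sort_eq, hval]
  · exact Multiset.pairwise_sort _ _
  · rw [List.pairwise_ofFn]
    intro a b hab
    have h : a.1 < b.1 := hab
    exact hmono _ _ (Fin.mk_le_mk.mpr (by omega))

lemma pOrd_Kset {m : ℕ} (p : Fin m → ℝ) (r : Fin m → Fin m) (hr : Function.Injective r)
    (hmono : ∀ a b : Fin m, a ≤ b → p (r a) ≤ p (r b)) (i k : ℕ) (him : i ≤ m)
    (hk1 : 1 ≤ k) (hki : k ≤ i) :
    pOrd p (Kset r i) k = p (r ⟨m - i + (k - 1), by omega⟩) := by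
  rw [pOrd, sort_Kset p r hr hmono i him]
  rw [List.getD_eq_getElem _ _ (by simp only [List.length_ofFn]; omega)]
  rw [List.getElem_ofFn]

lemma card_Kset {m : ℕ} (r : Fin m → Fin m) (hr : Function.Injective r) (i : ℕ) (him : i ≤ m) :
    (Kset r i).card = i := by
  rw [Kset, Finset.card_image_of_injective _ hr, Finset.card_def, Kset_filter_val i him]
  simp

theorem stmt2
    (m : ℕ) (hm : 1 ≤ m) (α : ℝ) (hα : 0 ≤ α ∧ α ≤ 1)
    (p : Fin m → ℝ) (hp : ∀ i, 0 ≤ p i ∧ p i ≤ 1)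
    (r : Fin m → Fin m) (hr : Function.Bijective r)
    (hmono : ∀ i j : Fin m, i ≤ j → p (r i) ≤ p (r j))
    (i j : ℕ) (hij : i ≤ j) (hjm : j ≤ m)
    (hKi : SimesU α p (Kset r i)) :
    SimesU α p (Kset r j) := by
  obtain ⟨k, hk1, hki, hineq⟩ := hKi
  have him : i ≤ m := le_trans hij hjm
  rw [card_Kset r hr.1 i him] at hki hineq
  have hi1 : 1 ≤ i := le_trans hk1 hki
  refine ⟨k + (j - i), by omega, ?_, ?_⟩
  · rw [card_Kset r hr.1 j hjm]; omega
  rw [card_Kset r hr.1 j hjm, pOrd_Kset p r hr.1 hmono j (k + (j - i)) hjm (by omega) (by omega)]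
  rw [pOrd_Kset p r hr.1 hmono i k him hk1 hki] at hineq
  have hidx : (⟨m - j + (k + (j - i) - 1), by omega⟩ : Fin m) = ⟨m - i + (k - 1), by omega⟩ := by
    exact Fin.ext (by simp; omega)
  rw [hidx]
  set P := p (r ⟨m - i + (k - 1), by omega⟩) with hP
  have hP0 : 0 ≤ P := (hp _).1
  have hcast : ((k + (j - i) : ℕ) : ℝ) = (k : ℝ) + (j : ℝ) - (i : ℝ) := by
    push_cast [Nat.cast_sub hij]; ring
  rw [hcast]
  have hi0 : (0 : ℝ) < (i : ℝ) := by exact_mod_cast hi1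
  have hki' : (k : ℝ) ≤ (i : ℝ) := by exact_mod_cast hki
  have hij' : (i : ℝ) ≤ (j : ℝ) := by exact_mod_cast hij
  nlinarith [mul_le_mul_of_nonneg_left hineq (le_of_lt (lt_of_lt_of_le hi0 hij')),
    mul_nonneg (mul_nonneg (sub_nonneg.2 hki') (sub_nonneg.2 hij')) hα.1,
    mul_nonneg hP0 (le_of_lt hi0)]
end

section
/- For every nonempty I ⊆ {1,…,m}: I ∈ 𝒳 if and only if there exists some 1 ≤ i ≤ |I| such that h·p_{(i:I)} ≤ i·α. -/
open Finset

attribute [local instance] Classical.propDecidable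

lemma sorted_getD_le (l : List ℝ) (hs : l.Pairwise (· ≤ ·)) (v : ℝ) (i : ℕ)
    (h1 : 1 ≤ i) (h2 : i ≤ l.countP (fun x => x ≤ v)) : l.getD (i-1) 0 ≤ v := by
  have hlen : i - 1 < l.length := by
    have := l.countP_le_length (p := fun x => x ≤ v)
    omega
  rw [List.getD_eq_getElem l 0 hlen]
  by_contra hv
  push_neg at hv
  have hsplit : l.countP (fun x => x ≤ v) =
      (l.take (i-1)).countP (fun x => x ≤ v) + (l.drop (i-1)).countP (fun x => x ≤ v) := by
    rw [← List.countP_append, List.take_append_drop]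
  have h3 : (l.take (i-1)).countP (fun x => x ≤ v) ≤ i - 1 := by
    calc (l.take (i-1)).countP (fun x => x ≤ v) ≤ (l.take (i-1)).length :=
          List.countP_le_length
    _ ≤ i - 1 := by simp [List.length_take]
  have h4 : (l.drop (i-1)).countP (fun x => x ≤ v) = 0 := by
    rw [List.countP_eq_zero]
    intro a ha
    obtain ⟨j, hj, rfl⟩ := List.mem_iff_getElem.mp ha
    have hj' : i - 1 + j < l.length := by
      rw [List.length_drop] at hj; omega
    rw [List.getElem_drop]
    have : l[i-1] ≤ l[i-1+j] := by
      have := hs.rel_get_of_le (a := ⟨i-1, hlen⟩)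
        (b := ⟨i-1+j, hj'⟩) (by simp)
      simpa using this
    simp only [decide_eq_true_eq]
    intro hle
    exact absurd hle (not_le.mpr (lt_of_lt_of_le hv this))
  omega

lemma sorted_le_countP (l : List ℝ) (hs : l.Pairwise (· ≤ ·)) (i : ℕ)
    (h1 : 1 ≤ i) (h2 : i ≤ l.length) : i ≤ l.countP (fun x => x ≤ l.getD (i-1) 0) := by
  have hlen : i - 1 < l.length := by omega
  have hsplit : l.countP (fun x => x ≤ l.getD (i-1) 0) =
      (l.take i).countP (fun x => x ≤ l.getD (i-1) 0)
        + (l.drop i).countP (fun x => x ≤ l.getD (i-1) 0) := by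
    rw [← List.countP_append, List.take_append_drop]
  have htake : (l.take i).countP (fun x => x ≤ l.getD (i-1) 0) = i := by
    have : (l.take i).countP (fun x => x ≤ l.getD (i-1) 0) = (l.take i).length := by
      rw [List.countP_eq_length]
      intro a ha
      obtain ⟨j, hj, rfl⟩ := List.mem_iff_getElem.mp ha
      have hj2 := hj
      rw [List.length_take] at hj2
      have hjl : j < l.length := by omega
      have hji : j < i := by omega
      rw [List.getElem_take, List.getD_eq_getElem l 0 hlen]
      simp only [decide_eq_true_eq]
      have := hs.rel_get_of_le (a := ⟨j, hjl⟩) (b := ⟨i-1, hlen⟩) (by simp; omega)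
      simpa using this
    rw [this, List.length_take]; omega
  omega


noncomputable def cnt {m : ℕ} (p : Fin m → ℝ) (v : ℝ) (I : Finset (Fin m)) : ℕ :=
  (I.filter fun j => p j ≤ v).card

lemma cnt_eq_countP {m : ℕ} (p : Fin m → ℝ) (v : ℝ) (I : Finset (Fin m)) :
    cnt p v I = ((I.val.map p).sort (· ≤ ·)).countP (fun x => x ≤ v) := by
  rw [← Multiset.coe_countP, Multiset.sort_eq, Multiset.countP_map]
  simp [cnt, Finset.card, Finset.filter]

lemma pOrd_le_of_cnt {m : ℕ} {p : Fin m → ℝ} {v : ℝ} {I : Finset (Fin m)} {i : ℕ}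
    (h1 : 1 ≤ i) (h2 : i ≤ cnt p v I) : pOrd p I i ≤ v := by
  refine sorted_getD_le _ (Multiset.pairwise_sort ..) v i h1 ?_
  rw [← cnt_eq_countP]; exact h2

lemma le_cnt_pOrd {m : ℕ} {p : Fin m → ℝ} {I : Finset (Fin m)} {i : ℕ}
    (h1 : 1 ≤ i) (h2 : i ≤ I.card) : i ≤ cnt p (pOrd p I i) I := by
  rw [cnt_eq_countP]
  refine sorted_le_countP _ (Multiset.pairwise_sort ..) i h1 ?_
  rw [Multiset.length_sort, Multiset.card_map]; exact h2

lemma pOrd_mem {m : ℕ} {p : Fin m → ℝ} {I : Finset (Fin m)} {i : ℕ}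
    (h1 : 1 ≤ i) (h2 : i ≤ I.card) : ∃ j ∈ I, pOrd p I i = p j := by
  have hlen : i - 1 < ((I.val.map p).sort (· ≤ ·)).length := by
    rw [Multiset.length_sort, Multiset.card_map]
    exact lt_of_lt_of_le (by omega) h2
  have hmem : pOrd p I i ∈ (I.val.map p).sort (· ≤ ·) := by
    rw [pOrd, List.getD_eq_getElem _ 0 hlen]
    exact List.getElem_mem _
  rw [Multiset.mem_sort, Multiset.mem_map] at hmem
  obtain ⟨j, hj, hjj⟩ := hmem
  exact ⟨j, hj, hjj.symm⟩

lemma pOrd_nonneg {m : ℕ} {p : Fin m → ℝ} (hp : ∀ j, 0 ≤ p j) (I : Finset (Fin m)) (i : ℕ) :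
    0 ≤ pOrd p I i := by
  by_cases hlen : i - 1 < ((I.val.map p).sort (· ≤ ·)).length
  · have hmem : pOrd p I i ∈ (I.val.map p).sort (· ≤ ·) := by
      rw [pOrd, List.getD_eq_getElem _ 0 hlen]
      exact List.getElem_mem _
    rw [Multiset.mem_sort, Multiset.mem_map] at hmem
    obtain ⟨j, _, hjj⟩ := hmem
    rw [← hjj]; exact hp j
  · rw [pOrd, List.getD_eq_default _ 0 (by omega)]

lemma cnt_mono_set {m : ℕ} {p : Fin m → ℝ} {v : ℝ} {I J : Finset (Fin m)} (h : I ⊆ J) :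
    cnt p v I ≤ cnt p v J :=
  Finset.card_le_card (Finset.filter_subset_filter _ h)

lemma cnt_le_card {m : ℕ} (p : Fin m → ℝ) (v : ℝ) (I : Finset (Fin m)) :
    cnt p v I ≤ I.card :=
  Finset.card_le_card (Finset.filter_subset _ _)

lemma cnt_union_le {m : ℕ} (p : Fin m → ℝ) (v : ℝ) (A B : Finset (Fin m)) :
    cnt p v (A ∪ B) ≤ cnt p v A + cnt p v B := by
  unfold cnt
  rw [Finset.filter_union]
  exact Finset.card_union_le _ _

lemma cnt_lower {m : ℕ} (p : Fin m → ℝ) (v : ℝ) {A B : Finset (Fin m)} (h : A ⊆ B) :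
    cnt p v B ≤ cnt p v A + (B.card - A.card) := by
  have := cnt_union_le p v A (B \ A)
  rw [Finset.union_sdiff_of_subset h] at this
  have h2 : cnt p v (B \ A) ≤ B.card - A.card := by
    have := cnt_le_card p v (B \ A)
    rwa [Finset.card_sdiff_of_subset h] at this
  omega

lemma cnt_compl {m : ℕ} (p : Fin m → ℝ) (v : ℝ) (I : Finset (Fin m)) :
    (I.filter fun j => v < p j).card = I.card - cnt p v I := by
  have := Finset.card_filter_add_card_filter_not (s := I) (p := fun j => p j ≤ v)
  simp only [not_le] at this
  unfold cnt
  omega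


lemma mem_Kset {m : ℕ} {r : Fin m → Fin m} {k : ℕ} {j : Fin m} :
    j ∈ Kset r k ↔ ∃ u : Fin m, m - k ≤ (u : ℕ) ∧ r u = j := by
  simp [Kset]

lemma Kset_card {m : ℕ} {r : Fin m → Fin m} (hr : Function.Injective r) {k : ℕ}
    (hk : k ≤ m) : (Kset r k).card = k := by
  rw [Kset, Finset.card_image_of_injective _ hr]
  rcases Nat.eq_zero_or_pos k with rfl | hk1
  · convert Finset.card_empty
    rw [Finset.filter_eq_empty_iff]
    intro j _
    simp only [not_le, Nat.sub_zero]
    exact j.2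
  · have hmk : m - k < m := by omega
    have : (Finset.univ.filter fun j : Fin m => m - k ≤ (j : ℕ)) = Finset.Ici ⟨m - k, hmk⟩ := by
      ext j
      simp [Fin.le_def]
    rw [this, Fin.card_Ici]
    simp only [Fin.val_mk]
    omega

lemma Kset_zero {m : ℕ} (r : Fin m → Fin m) : Kset r 0 = ∅ := by
  rw [Kset]
  convert Finset.image_empty r
  rw [Finset.filter_eq_empty_iff]
  intro j _
  simp only [not_le, Nat.sub_zero]
  exact j.2

lemma le_of_not_mem_Kset {m : ℕ} {p : Fin m → ℝ} {r : Fin m → Fin m}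
    (hr : Function.Bijective r) (hmono : ∀ i j : Fin m, i ≤ j → p (r i) ≤ p (r j))
    {k : ℕ} {j w : Fin m} (hj : j ∉ Kset r k) (hw : w ∈ Kset r k) : p j ≤ p w := by
  obtain ⟨u, rfl⟩ := hr.2 j
  obtain ⟨u', hu', rfl⟩ := mem_Kset.mp hw
  have hu : ¬ (m - k ≤ (u : ℕ)) := fun h => hj (mem_Kset.mpr ⟨u, h, rfl⟩)
  exact hmono u u' (by rw [Fin.le_def]; omega)

lemma Kset_univ {m : ℕ} {r : Fin m → Fin m} (hr : Function.Bijective r) {k : ℕ}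
    (hk : m ≤ k) : Kset r k = Finset.univ := by
  rw [Kset]
  have : (Finset.univ.filter fun j : Fin m => m - k ≤ (j : ℕ)) = Finset.univ := by
    rw [Finset.filter_eq_self]
    intro j _
    omega
  rw [this, Finset.image_univ_of_surjective hr.2]

lemma Kset_succ_sub {m : ℕ} (hm : 1 ≤ m) (r : Fin m → Fin m) (n : ℕ) :
    ∃ x, Kset r (n + 1) ⊆ insert x (Kset r n) := by
  by_cases hn : n + 1 ≤ m
  · refine ⟨r ⟨m - n - 1, by omega⟩, fun j hj => ?_⟩
    obtain ⟨u, hu, rfl⟩ := mem_Kset.mp hj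
    rcases eq_or_lt_of_le hu with heq | hlt
    · have : u = ⟨m - n - 1, by omega⟩ := by
        apply Fin.ext
        simp only [Fin.val_mk]
        omega
      rw [this]
      exact Finset.mem_insert_self _ _
    · exact Finset.mem_insert_of_mem (mem_Kset.mpr ⟨u, by omega, rfl⟩)
  · refine ⟨r ⟨0, by omega⟩, fun j hj => ?_⟩
    obtain ⟨u, hu, rfl⟩ := mem_Kset.mp hj
    exact Finset.mem_insert_of_mem (mem_Kset.mpr ⟨u, by omega, rfl⟩)

lemma exists_card_union {m : ℕ} (hm : 1 ≤ m) (r : Fin m → Fin m)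
    (hr : Function.Bijective r) (I : Finset (Fin m)) (h : ℕ)
    (hIh : I.card ≤ h) (hhm : h ≤ m) : ∃ n ≤ m, (I ∪ Kset r n).card = h := by
  have key : ∀ n, h ≤ (I ∪ Kset r n).card → ∃ n' ≤ n, (I ∪ Kset r n').card = h := by
    intro n
    induction n with
    | zero =>
      intro h0
      refine ⟨0, le_rfl, le_antisymm ?_ h0⟩
      rw [Kset_zero, Finset.union_empty]
      exact hIh
    | succ n ih =>
      intro hs
      by_cases hn : h ≤ (I ∪ Kset r n).card
      · obtain ⟨n', hn', he⟩ := ih hn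
        exact ⟨n', by omega, he⟩
      · push_neg at hn
        refine ⟨n + 1, le_rfl, le_antisymm ?_ hs⟩
        obtain ⟨x, hx⟩ := Kset_succ_sub hm r n
        calc (I ∪ Kset r (n+1)).card ≤ (I ∪ insert x (Kset r n)).card :=
              Finset.card_le_card (Finset.union_subset_union le_rfl hx)
        _ ≤ (insert x (I ∪ Kset r n)).card := by
              apply Finset.card_le_card
              intro j hj
              rw [Finset.union_insert] at hj
              exact hj
        _ ≤ (I ∪ Kset r n).card + 1 := Finset.card_insert_le _ _
        _ ≤ h := by omega
  have hfm : (I ∪ Kset r m).card = m := by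
    rw [Kset_univ hr le_rfl, Finset.union_eq_right.mpr (Finset.subset_univ I),
      Finset.card_univ, Fintype.card_fin]
  obtain ⟨n', hn', he⟩ := key m (by omega)
  exact ⟨n', hn', he⟩

lemma SimesU_empty {m : ℕ} (α : ℝ) (p : Fin m → ℝ) : ¬ SimesU α p (∅ : Finset (Fin m)) := by
  rintro ⟨i, h1, h2, -⟩
  rw [Finset.card_empty] at h2
  omega

lemma hval_spec {m : ℕ} (α : ℝ) (p : Fin m → ℝ) (r : Fin m → Fin m) :
    hval α p r ≤ m ∧ ¬ SimesU α p (Kset r (hval α p r)) := by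
  have h0 : 0 ∈ {i | i ≤ m ∧ ¬ SimesU α p (Kset r i)} :=
    ⟨Nat.zero_le m, by rw [Kset_zero]; exact SimesU_empty α p⟩
  have hbdd : BddAbove {i | i ≤ m ∧ ¬ SimesU α p (Kset r i)} := ⟨m, fun x hx => hx.1⟩
  exact Nat.sSup_mem ⟨0, h0⟩ hbdd

lemma SimesU_Kset_of_lt {m : ℕ} {α : ℝ} {p : Fin m → ℝ} {r : Fin m → Fin m} {k : ℕ}
    (h1 : hval α p r < k) (h2 : k ≤ m) : SimesU α p (Kset r k) := by
  by_contra hk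
  have hbdd : BddAbove {i | i ≤ m ∧ ¬ SimesU α p (Kset r i)} := ⟨m, fun x hx => hx.1⟩
  have := le_csSup hbdd (Set.mem_setOf.mpr ⟨h2, hk⟩)
  rw [show sSup {i | i ≤ m ∧ ¬ SimesU α p (Kset r i)} = hval α p r from rfl] at this
  omega

theorem stmt3'
    (m : ℕ) (hm : 1 ≤ m) (α : ℝ) (hα : 0 ≤ α ∧ α ≤ 1)
    (p : Fin m → ℝ) (hp : ∀ i, 0 ≤ p i ∧ p i ≤ 1)
    (r : Fin m → Fin m) (hr : Function.Bijective r)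
    (hmono : ∀ i j : Fin m, i ≤ j → p (r i) ≤ p (r j))
    (I : Finset (Fin m)) (hI : I.Nonempty) :
    (∀ J, I ⊆ J → SimesU α p J) ↔
      ∃ i, 1 ≤ i ∧ i ≤ I.card ∧ (hval α p r : ℝ) * pOrd p I i ≤ (i : ℝ) * α := by
  have hp0 : ∀ j, 0 ≤ p j := fun j => (hp j).1
  obtain ⟨h, hh⟩ : ∃ h', h' = hval α p r := ⟨_, rfl⟩
  rw [← hh]
  have hspec := hval_spec α p r
  rw [← hh] at hspec
  obtain ⟨hhm0, hKh0⟩ := hspec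
  have hKlt : ∀ k, h < k → k ≤ m → SimesU α p (Kset r k) := fun k hk1 hk2 =>
    SimesU_Kset_of_lt (by rw [← hh]; exact hk1) hk2
  clear hh
  constructor
  · -- forward direction
    intro hcl
    by_contra hno
    push_neg at hno
    -- hno : ∀ i, 1 ≤ i → i ≤ I.card → i * α < h * pOrd p I i
    by_cases hcase : h ≤ I.card
    · obtain ⟨i, hi1, hi2, hile⟩ := hcl I le_rfl
      have hlt := hno i hi1 hi2
      have hnn : 0 ≤ pOrd p I i := pOrd_nonneg hp0 I i
      have hcast : (h : ℝ) ≤ (I.card : ℝ) := Nat.cast_le.mpr hcase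
      nlinarith
    · push_neg at hcase
      obtain ⟨n, hn, hJcard⟩ := exists_card_union hm r hr I h (le_of_lt hcase) hhm0
      set J := I ∪ Kset r n with hJ
      have hIJ : I ⊆ J := Finset.subset_union_left
      obtain ⟨i, hi1, hi2, hile⟩ := hcl J hIJ
      rw [hJcard] at hi2 hile
      set x := pOrd p J i with hx
      have hcntJ : i ≤ cnt p x J := le_cnt_pOrd hi1 (hJcard ▸ hi2)
      set a := cnt p x I with ha
      set b := cnt p x (J \ I) with hb
      have hab : cnt p x J ≤ a + b := by
        have := cnt_union_le p x I (J \ I)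
        rwa [Finset.union_sdiff_of_subset hIJ] at this
      have hacard : a ≤ I.card := cnt_le_card p x I
      have hsd : (J \ I).card = h - I.card := by
        rw [Finset.card_sdiff_of_subset hIJ, hJcard]
      by_cases hb0 : b = 0
      · -- all small elements from I
        have hia : i ≤ a := by omega
        have hiI : i ≤ I.card := le_trans hia hacard
        have hpx : pOrd p I i ≤ x := pOrd_le_of_cnt hi1 hia
        have hlt := hno i hi1 hiI
        have hcast : (0:ℝ) ≤ (h : ℝ) := Nat.cast_nonneg h
        nlinarith
      · -- some small element from Kset r n
        have hb1 : 1 ≤ b := by omega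
        have hIh' : I.card ≤ h := le_of_lt hcase
        have hbcard : b + I.card ≤ h := by
          have := cnt_le_card p x (J \ I)
          rw [hsd] at this
          omega
        set A := a + b with hA
        have hAh : A ≤ h := by omega
        have hAi : i ≤ A := le_trans hcntJ hab
        have hA1 : 1 ≤ A := by omega
        -- find a witness w ∈ J \ I with p w ≤ x
        have hwit : ∃ w ∈ J \ I, p w ≤ x := by
          have hpos : 0 < cnt p x (J \ I) := by omega
          unfold cnt at hpos
          obtain ⟨w, hw⟩ := Finset.card_pos.mp hpos
          rw [Finset.mem_filter] at hw
          exact ⟨w, hw.1, hw.2⟩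
        obtain ⟨w, hwJI, hwx⟩ := hwit
        have hwK : w ∈ Kset r n := by
          rcases Finset.mem_sdiff.mp hwJI with ⟨hwJ, hwI⟩
          rcases Finset.mem_union.mp hwJ with h' | h'
          · exact absurd h' hwI
          · exact h'
        -- every j with x < p j lies in J
        have hbig : (Finset.univ.filter fun j => x < p j) ⊆
            (I.filter fun j => x < p j) ∪ ((J \ I).filter fun j => x < p j) := by
          intro j hj
          rw [Finset.mem_filter] at hj
          by_cases hjI : j ∈ I
          · exact Finset.mem_union_left _ (Finset.mem_filter.mpr ⟨hjI, hj.2⟩)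
          · have hjK : j ∈ Kset r n := by
              by_contra hjK
              exact absurd (le_trans (le_of_not_mem_Kset hr hmono hjK hwK) hwx)
                (not_le.mpr hj.2)
            refine Finset.mem_union_right _ (Finset.mem_filter.mpr ⟨?_, hj.2⟩)
            exact Finset.mem_sdiff.mpr ⟨Finset.mem_union_right _ hjK, hjI⟩
        have hbigcard : (Finset.univ.filter fun j => x < p j).card ≤
            (I.card - a) + ((J \ I).card - b) := by
          calc (Finset.univ.filter fun j => x < p j).card
              ≤ ((I.filter fun j => x < p j) ∪ ((J \ I).filter fun j => x < p j)).card :=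
                Finset.card_le_card hbig
          _ ≤ (I.filter fun j => x < p j).card + ((J \ I).filter fun j => x < p j).card :=
                Finset.card_union_le _ _
          _ = (I.card - a) + ((J \ I).card - b) := by rw [cnt_compl, cnt_compl]
        have huniv : (Finset.univ : Finset (Fin m)).card = m := by
          rw [Finset.card_univ, Fintype.card_fin]
        have hcntuniv : m - h + A ≤ cnt p x Finset.univ := by
          have hcompl := cnt_compl p x (Finset.univ : Finset (Fin m))
          have h1 := cnt_le_card p x (Finset.univ : Finset (Fin m))
          rw [huniv] at hcompl h1
          have hbound : (J \ I).card ≤ m := by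
            have := Finset.card_le_univ (J \ I)
            rwa [Fintype.card_fin] at this
          have hIm : I.card ≤ m := by
            have := Finset.card_le_univ I
            rwa [Fintype.card_fin] at this
          omega
        have hcntK : A ≤ cnt p x (Kset r h) := by
          have := cnt_lower p x (Finset.subset_univ (Kset r h))
          rw [huniv, Kset_card hr.1 hhm0] at this
          omega
        have hvx : pOrd p (Kset r h) A ≤ x := pOrd_le_of_cnt hA1 hcntK
        have hKA : (A : ℝ) * α < (h : ℝ) * pOrd p (Kset r h) A := by
          by_contra hc
          push_neg at hc
          exact hKh0 ⟨A, hA1, by rw [Kset_card hr.1 hhm0]; exact hAh, by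
            rw [Kset_card hr.1 hhm0]; exact hc⟩
        have hiA : (i : ℝ) * α ≤ (A : ℝ) * α := by
          apply mul_le_mul_of_nonneg_right (Nat.cast_le.mpr hAi) hα.1
        have hhx : (h : ℝ) * pOrd p (Kset r h) A ≤ (h : ℝ) * x :=
          mul_le_mul_of_nonneg_left hvx (Nat.cast_nonneg h)
        linarith
  · -- backward direction
    rintro ⟨i₀, hi1, hi2, hile⟩ J hIJ
    have hk1 : 1 ≤ J.card := Finset.card_pos.mpr (hI.mono hIJ)
    have hkm : J.card ≤ m := by
      have := Finset.card_le_univ J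
      rwa [Fintype.card_fin] at this
    by_cases hcase : J.card ≤ h
    · refine ⟨i₀, hi1, le_trans hi2 (Finset.card_le_card hIJ), ?_⟩
      have hpJ : pOrd p J i₀ ≤ pOrd p I i₀ :=
        pOrd_le_of_cnt hi1 (le_trans (le_cnt_pOrd hi1 hi2) (cnt_mono_set hIJ))
      have hnn : 0 ≤ pOrd p J i₀ := pOrd_nonneg hp0 J i₀
      calc (J.card : ℝ) * pOrd p J i₀ ≤ (h : ℝ) * pOrd p J i₀ :=
            mul_le_mul_of_nonneg_right (Nat.cast_le.mpr hcase) hnn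
      _ ≤ (h : ℝ) * pOrd p I i₀ := mul_le_mul_of_nonneg_left hpJ (Nat.cast_nonneg h)
      _ ≤ (i₀ : ℝ) * α := hile
    · push_neg at hcase
      obtain ⟨i₁, h1, h2, hle1⟩ := hKlt J.card hcase hkm
      rw [Kset_card hr.1 hkm] at h2 hle1
      set v := pOrd p (Kset r J.card) i₁ with hv
      obtain ⟨w, hwK, hwv⟩ := pOrd_mem h1 (by rw [Kset_card hr.1 hkm]; exact h2)
      -- all elements greater than v are in Kset
      have hbig : (Finset.univ.filter fun j => v < p j) ⊆
          ((Kset r J.card).filter fun j => v < p j) := by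
        intro j hj
        rw [Finset.mem_filter] at hj
        refine Finset.mem_filter.mpr ⟨?_, hj.2⟩
        by_contra hjK
        have hjw : p j ≤ p w := le_of_not_mem_Kset hr hmono hjK hwK
        have hjv : p j ≤ v := by rw [hv, hwv]; exact hjw
        exact absurd hjv (not_le.mpr hj.2)
      have hcntKv : i₁ ≤ cnt p v (Kset r J.card) :=
        le_cnt_pOrd h1 (by rw [Kset_card hr.1 hkm]; exact h2)
      have huniv : (Finset.univ : Finset (Fin m)).card = m := by
        rw [Finset.card_univ, Fintype.card_fin]
      have hcntuniv : m - J.card + i₁ ≤ cnt p v Finset.univ := by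
        have hcompl := cnt_compl p v (Finset.univ : Finset (Fin m))
        have hcomplK := cnt_compl p v (Kset r J.card)
        have hcard := Kset_card hr.1 hkm (r := r)
        have hb := Finset.card_le_card hbig
        have h1' := cnt_le_card p v (Finset.univ : Finset (Fin m))
        have h2' := cnt_le_card p v (Kset r J.card)
        rw [huniv] at hcompl h1'
        rw [hcard] at hcomplK h2'
        omega
      have hcntJ : i₁ ≤ cnt p v J := by
        have := cnt_lower p v (Finset.subset_univ J)
        rw [huniv] at this
        omega
      have hpJ : pOrd p J i₁ ≤ v := pOrd_le_of_cnt h1 hcntJ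
      refine ⟨i₁, h1, h2, ?_⟩
      calc (J.card : ℝ) * pOrd p J i₁ ≤ (J.card : ℝ) * v :=
            mul_le_mul_of_nonneg_left hpJ (Nat.cast_nonneg _)
      _ ≤ (i₁ : ℝ) * α := hle1

theorem stmt3
    (m : ℕ) (hm : 1 ≤ m) (α : ℝ) (hα : 0 ≤ α ∧ α ≤ 1)
    (p : Fin m → ℝ) (hp : ∀ i, 0 ≤ p i ∧ p i ≤ 1)
    (r : Fin m → Fin m) (hr : Function.Bijective r)
    (hmono : ∀ i j : Fin m, i ≤ j → p (r i) ≤ p (r j))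
    (I : Finset (Fin m)) (hI : I.Nonempty) :
    ClosedX α p I ↔
      ∃ i, 1 ≤ i ∧ i ≤ I.card ∧ (hval α p r : ℝ) * pOrd p I i ≤ (i : ℝ) * α := by
  exact stmt3' m hm α hα p hp r hr hmono I hI
end

section
/- For every S ⊆ {1,…,m}: |S ∩ R| ≤ d(S) ≤ |S ∩ Z| ≤ |S ∩ B_α|, where R is the set of elementary hypotheses rejected by the closed testing procedure (Hommel's rejections), Z is the concentration set, and B_α is the Benjamini–Hochberg rejection set at level α. -/
open Finset

attribute [local instance] Classical.propDecidable

section Aux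
variable {m : ℕ} (p : Fin m → ℝ) (r : Fin m → Fin m)
lemma filterK_eq (c : ℕ) (hc : c ≤ m) :
    (Finset.univ.filter fun j : Fin m => m - c ≤ (j : ℕ))
      = Finset.univ.image (fun i : Fin c => (⟨m - c + i, by omega⟩ : Fin m)) := by
  ext j
  have hj := j.isLt
  simp only [mem_filter, mem_univ, true_and, mem_image]
  constructor
  · intro hge
    exact ⟨⟨(j : ℕ) - (m - c), by omega⟩, Fin.ext (by simp; omega)⟩
  · rintro ⟨i, rfl⟩; simp
lemma e_inj (c : ℕ) (hc : c ≤ m) :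
    Function.Injective (fun i : Fin c => (⟨m - c + i, by omega⟩ : Fin m)) := by
  intro a b hab
  have := congrArg Fin.val hab
  simp at this
  exact Fin.ext this
lemma sortK (hr : Function.Bijective r)
    (hmono : ∀ i j : Fin m, i ≤ j → p (r i) ≤ p (r j)) (c : ℕ) (hc : c ≤ m) :
    ((Kset r c).val.map p).sort (· ≤ ·)
      = List.ofFn (fun i : Fin c => p (r ⟨m - c + i, by omega⟩)) := by
  have hkv : (Kset r c).val.map p
      = Multiset.map (fun i : Fin c => p (r ⟨m - c + i, by omega⟩)) Finset.univ.val := by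
    rw [Kset, filterK_eq c hc, image_image,
      image_val_of_injOn ((hr.1.comp (e_inj c hc)).injOn), Multiset.map_map]
    rfl
  have hsorted : List.Pairwise (· ≤ ·)
      (List.ofFn (fun i : Fin c => p (r ⟨m - c + i, by omega⟩))) := by
    refine (List.sortedLE_ofFn_iff.mpr ?_).pairwise
    intro a b hab
    exact hmono _ _ (by rw [Fin.le_def]; simp; omega)
  refine List.Perm.eq_of_pairwise' (Multiset.pairwise_sort _ _) hsorted ?_
  rw [← Multiset.coe_eq_coe, Multiset.sort_eq, hkv, Fin.univ_def, List.ofFn_eq_map]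
  simp
lemma cardK (hr : Function.Bijective r) (c : ℕ) (hc : c ≤ m) : (Kset r c).card = c := by
  rw [Kset, Finset.card_image_of_injective _ hr.1, filterK_eq c hc,
    Finset.card_image_of_injective _ (e_inj c hc), card_univ, Fintype.card_fin]
lemma pOrdK (hr : Function.Bijective r)
    (hmono : ∀ i j : Fin m, i ≤ j → p (r i) ≤ p (r j)) (c : ℕ) (hc : c ≤ m)
    (i : ℕ) (h1 : 1 ≤ i) (h2 : i ≤ c) :
    pOrd p (Kset r c) i = p (r ⟨m - c + (i - 1), by omega⟩) := by
  rw [pOrd, sortK p r hr hmono c hc,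
    List.getD_eq_getElem _ _ (by simp; omega), List.getElem_ofFn]
lemma ksetm (hr : Function.Bijective r) : Kset r m = univ := by
  rw [Kset, Finset.filter_true_of_mem (fun j _ => by omega)]
  exact Finset.image_univ_of_surjective hr.2
lemma kmono {i j : ℕ} (hij : i ≤ j) : Kset r i ⊆ Kset r j :=
  Finset.image_subset_image (fun x hx => by
    simp only [mem_filter, mem_univ, true_and] at *; omega)
lemma lmono {i j : ℕ} (hij : i ≤ j) : Lset r i ⊆ Lset r j :=
  Finset.image_subset_image (fun x hx => by
    simp only [mem_filter, mem_univ, true_and] at *; omega)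
lemma sdiff_sub_K (hr : Function.Bijective r) (S : Finset (Fin m)) (z : ℕ) :
    S \ Lset r z ⊆ Kset r (m - z) := by
  intro a ha
  obtain ⟨i, rfl⟩ := hr.2 a
  rw [mem_sdiff] at ha
  have hi : ¬ (i : ℕ) < z := fun h =>
    ha.2 (mem_image.mpr ⟨i, mem_filter.mpr ⟨mem_univ _, h⟩, rfl⟩)
  exact mem_image.mpr ⟨i, mem_filter.mpr ⟨mem_univ _, by omega⟩, rfl⟩
lemma kset_zero : Kset r 0 = (∅ : Finset (Fin m)) := by
  rw [Kset, Finset.filter_false_of_mem, Finset.image_empty]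
  intro j _
  have := j.isLt
  omega
end Aux

theorem stmt11
    (m : ℕ) (hm : 1 ≤ m) (α : ℝ) (hα : 0 ≤ α ∧ α ≤ 1)
    (p : Fin m → ℝ) (hp : ∀ i, 0 ≤ p i ∧ p i ≤ 1)
    (r : Fin m → Fin m) (hr : Function.Bijective r)
    (hmono : ∀ i j : Fin m, i ≤ j → p (r i) ≤ p (r j))
    (S : Finset (Fin m)) :
    (S ∩ Finset.univ.filter fun i => ClosedX α p {i}).card ≤ dval α p S ∧
    dval α p S ≤ (S ∩ Lset r (zval α p r)).card ∧
    (S ∩ Lset r (zval α p r)).card ≤ (S ∩ Lset r (bval α p)).card := by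
  obtain ⟨hα0, hα1⟩ := hα
  -- basic facts about h
  have hU0 : ¬ SimesU α p (Kset r 0) := by
    rw [kset_zero]
    rintro ⟨i, h1, h2, -⟩
    simp at h2
    omega
  have hbdd : BddAbove {i | i ≤ m ∧ ¬ SimesU α p (Kset r i)} := ⟨m, fun x hx => hx.1⟩
  have hmem : hval α p r ∈ {i | i ≤ m ∧ ¬ SimesU α p (Kset r i)} :=
    Nat.sSup_mem ⟨0, Nat.zero_le m, hU0⟩ hbdd
  set h := hval α p r with hhdef
  have hhm : h ≤ m := hmem.1
  have hKh : ¬ SimesU α p (Kset r h) := hmem.2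
  -- key facts about z and b
  have key : m - zval α p r ≤ h ∧ zval α p r ≤ bval α p := by
    by_cases hcase : h = m
    · rw [zval, ← hhdef, if_pos hcase]
      exact ⟨by omega, Nat.zero_le _⟩
    · have hlt : h < m := lt_of_le_of_ne hhm hcase
      have hU1 : SimesU α p (Kset r (h + 1)) := by
        by_contra hc
        have : h + 1 ≤ h := le_csSup hbdd ⟨by omega, hc⟩
        omega
      obtain ⟨i, hi1, hi2, hile⟩ := hU1
      rw [cardK r hr (h + 1) (by omega)] at hi2 hile
      set j := m - (h + 1) + i with hjdef
      have hj1 : 1 ≤ j := by omega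
      have hjm : j ≤ m := by omega
      have hjh : m - h ≤ j := by omega
      have hpu : pOrd p Finset.univ j = pOrd p (Kset r (h + 1)) i := by
        rw [← ksetm r hr, pOrdK p r hr hmono m le_rfl j hj1 hjm,
          pOrdK p r hr hmono (h + 1) (by omega) i hi1 hi2]
        exact congrArg (fun x => p (r x)) (by apply Fin.ext; simp; omega)
      have hq0 : 0 ≤ pOrd p (Kset r (h + 1)) i := by
        rw [pOrdK p r hr hmono (h + 1) (by omega) i hi1 hi2]
        exact (hp _).1
      have hcast : (j : ℝ) + ((h : ℝ) + 1) = (m : ℝ) + (i : ℝ) := by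
        exact_mod_cast congrArg (Nat.cast : ℕ → ℝ) (show j + (h + 1) = m + i by omega)
      -- j is in the z-set
      have hjz : j ∈ {i | m - h ≤ i ∧ i ≤ m ∧
          (h : ℝ) * pOrd p Finset.univ i ≤ ((i : ℝ) - m + h + 1) * α} := by
        refine ⟨hjh, hjm, ?_⟩
        rw [hpu]
        have h1 : ((h : ℝ) + 1) * pOrd p (Kset r (h + 1)) i ≤ (i : ℝ) * α := by
          push_cast at hile ⊢
          linarith
        have h2 : ((j : ℝ) - m + h + 1) = (i : ℝ) := by linarith
        rw [h2]
        linarith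
      -- j is in the b-set
      have hmul : m * i ≤ j * (h + 1) := by
        calc m * i = (m - (h + 1)) * i + (h + 1) * i := by
              rw [← Nat.add_mul]; congr 1; omega
          _ ≤ (m - (h + 1)) * (h + 1) + (h + 1) * i := by
              gcongr
          _ = j * (h + 1) := by rw [hjdef]; ring
      have hjb : j ∈ {i | 1 ≤ i ∧ i ≤ m ∧
          (m : ℝ) * pOrd p Finset.univ i ≤ (i : ℝ) * α} := by
        refine ⟨hj1, hjm, ?_⟩
        rw [hpu]
        have hpos : (0 : ℝ) < (h : ℝ) + 1 := by positivity
        rw [← mul_le_mul_iff_right₀ hpos]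
        have hA : ((h : ℝ) + 1) * pOrd p (Kset r (h + 1)) i ≤ (i : ℝ) * α := by
          push_cast at hile ⊢
          linarith
        have hB : (m : ℝ) * i ≤ (j : ℝ) * ((h : ℝ) + 1) := by
          exact_mod_cast hmul
        calc ((h : ℝ) + 1) * ((m : ℝ) * pOrd p (Kset r (h + 1)) i)
            = (m : ℝ) * (((h : ℝ) + 1) * pOrd p (Kset r (h + 1)) i) := by ring
          _ ≤ (m : ℝ) * ((i : ℝ) * α) := by
              have hm0 : (0 : ℝ) ≤ (m : ℝ) := by positivity
              exact mul_le_mul_of_nonneg_left hA hm0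
          _ = ((m : ℝ) * i) * α := by ring
          _ ≤ ((j : ℝ) * ((h : ℝ) + 1)) * α := mul_le_mul_of_nonneg_right hB hα0
          _ = ((h : ℝ) + 1) * ((j : ℝ) * α) := by ring
      rw [zval, ← hhdef, if_neg hcase]
      constructor
      · obtain ⟨hz1, hz2, -⟩ := Nat.sInf_mem (⟨j, hjz⟩ : Set.Nonempty _)
        omega
      · calc sInf _ ≤ j := Nat.sInf_le hjz
          _ ≤ bval α p := le_csSup ⟨m, fun x hx => hx.2.1⟩ hjb
  refine ⟨?_, ?_, ?_⟩
  · -- part 1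
    have hub : tval α p S ≤ (S \ Finset.univ.filter fun i => ClosedX α p {i}).card := by
      apply csSup_le'
      rintro k ⟨I, hIS, hIX, rfl⟩
      apply Finset.card_le_card
      intro x hx
      rw [mem_sdiff]
      refine ⟨hIS hx, fun hxR => hIX ?_⟩
      intro J hJ
      exact (mem_filter.mp hxR).2 J (Finset.singleton_subset_iff.mpr (hJ hx))
    have := Finset.card_inter_add_card_sdiff S
      (Finset.univ.filter fun i => ClosedX α p {i})
    rw [dval]
    omega
  · -- part 2
    have hwit : (S \ Lset r (zval α p r)).card ∈
        {k | ∃ I, I ⊆ S ∧ ¬ ClosedX α p I ∧ I.card = k} := by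
      refine ⟨S \ Lset r (zval α p r), sdiff_subset, fun hC => hKh ?_, rfl⟩
      exact hC (Kset r h) ((sdiff_sub_K r hr S _).trans (kmono r key.1))
    have ht : (S \ Lset r (zval α p r)).card ≤ tval α p S :=
      le_csSup ⟨S.card, fun k ⟨I, hIS, _, hc⟩ => hc ▸ Finset.card_le_card hIS⟩ hwit
    have := Finset.card_inter_add_card_sdiff S (Lset r (zval α p r))
    rw [dval]
    omega
  · exact Finset.card_le_card (Finset.inter_subset_inter le_rfl (lmono r key.2))
end
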